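/- Let A be a local domain with maximal ideal m_A, let α : A → A/m_A be the residue map, let B be a proper local subring of the field A/m_A with quotient field A/m_A, and let D = α⁻¹(B). If dim A ≥ 1 and dim B ≥ 1, then D is non-archimedean; more precisely, for every x in the maximal ideal of D with x ∉ m_A, one has m_A ⊆ ⋂_{k>0} x^k D, so ⋂_{k>0} x^k D ≠ 0. -/
import Mathlib


/-- Let `A` be a local domain with residue map `α : A → A/m_A`, let `B` be a proper local
subring of the residue field with quotient field `A/m_A`, and let `D = α⁻¹(B)`.  If
`dim A ≥ 1` and `dim B ≥ 1`, then for every `x` in the maximal ideal of `D` (i.e. with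
`α x` in the maximal ideal of `B`) such that `x ∉ m_A`, one has
`m_A ⊆ ⋂_{k>0} x^k D`; in particular `⋂_{k>0} x^k D ≠ 0`, so `D` is non-archimedean. -/
theorem pullback_of_local_subring_nonarchimedean
    (A : Type) [CommRing A] [IsDomain A] [IsLocalRing A]
    (B : Subring (IsLocalRing.ResidueField A)) [IsLocalRing B]
    (hBproper : B ≠ ⊤)
    (hBfrac : IsFractionRing B (IsLocalRing.ResidueField A))
    (hdimA : 1 ≤ ringKrullDim A) (hdimB : 1 ≤ ringKrullDim B)
    (D : Subring A) (hD : D = B.comap (IsLocalRing.residue A))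
    (x : A) (hxD : x ∈ B.comap (IsLocalRing.residue A))
    (hxmax : (⟨IsLocalRing.residue A x, hxD⟩ : B) ∈ IsLocalRing.maximalIdeal B)
    (hxnot : x ∉ IsLocalRing.maximalIdeal A) :
    (∀ a ∈ IsLocalRing.maximalIdeal A, ∀ k : ℕ, ∃ d ∈ D, a = x ^ k * d) ∧
      (∃ y : A, y ≠ 0 ∧ ∀ k : ℕ, ∃ d ∈ D, y = x ^ k * d) := by
  -- x is a unit of A since it is not in the maximal ideal
  have hxu : IsUnit x := by
    by_contra h
    exact hxnot (IsLocalRing.mem_maximalIdeal x |>.mpr h)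
  obtain ⟨u, hu⟩ := hxu
  have key : ∀ a ∈ IsLocalRing.maximalIdeal A, ∀ k : ℕ, ∃ d ∈ D, a = x ^ k * d := by
    intro a ha k
    refine ⟨(↑u⁻¹ : A) ^ k * a, ?_, ?_⟩
    · rw [hD, Subring.mem_comap]
      have h0 : IsLocalRing.residue A a = 0 := Ideal.Quotient.eq_zero_iff_mem.mpr ha
      rw [map_mul, h0, mul_zero]
      exact B.zero_mem
    · rw [← mul_assoc, ← hu, ← mul_pow]
      simp
  refine ⟨key, ?_⟩
  -- the maximal ideal of A is nonzero since dim A ≥ 1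
  have hmne : IsLocalRing.maximalIdeal A ≠ ⊥ := by
    intro h
    have hfield : IsField A := by
      rw [IsLocalRing.isField_iff_maximalIdeal_eq]; exact h
    have := ringKrullDim_eq_zero_of_isField hfield
    rw [this] at hdimA
    norm_num at hdimA
  obtain ⟨y, hy, hy0⟩ := Submodule.exists_mem_ne_zero_of_ne_bot hmne
  exact ⟨y, hy0, fun k => key y hy k⟩
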